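/- In the local setting, assume L/K is ramified and non-dyadic, i.e. the maximal ideal of A generates the square of the maximal ideal of B, 2 is a unit of A, and the uniformizer π of B is chosen with σ(π) = −π. Then for every square-free B-lattice Λ in (V,H), the map (ℓ + Λ, m + Λ) ↦ π·H(ℓ,m) + πB is a well-defined nondegenerate alternating F-bilinear form on the F-vector space Λ*/Λ, where F = B/πB. -/

import Mathlib

/-- The dual lattice of a lattice `Λ` (given as a set) with respect to a Hermitian form `H`. -/
def hermDual (B : Type) {L V : Type} [CommRing B] [Field L] [Algebra B L]
    [AddCommGroup V] [Module L V] (H : V → V → L) (Λ : Set V) : Set V :=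
  {v : V | ∀ m ∈ Λ, ∃ b : B, algebraMap B L b = H v m}

lemma fixed_mem_range {K L : Type} [Field K] [Field L] [Algebra K L]
    (hquad : Module.finrank K L = 2) (σ : L ≃ₐ[K] L) (hσne : σ ≠ AlgEquiv.refl)
    {x : L} (hx : σ x = x) : ∃ k : K, algebraMap K L k = x := by
  by_contra h
  push_neg at h
  have : FiniteDimensional K L := FiniteDimensional.of_finrank_eq_succ hquad
  have hinj : Function.Injective (algebraMap K L) := (algebraMap K L).injective
  have hli : LinearIndependent K ![x, 1] := by
    rw [LinearIndependent.pair_iff]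
    intro s t hst
    rcases eq_or_ne s 0 with hs | hs
    · subst hs
      simp only [zero_smul, zero_add] at hst
      rw [Algebra.smul_def, mul_one] at hst
      refine ⟨rfl, hinj (by simpa using hst)⟩
    · exfalso
      apply h (-t / s)
      have hx' : (algebraMap K L s) * x = -(algebraMap K L t) := by
        rw [Algebra.smul_def, Algebra.smul_def, mul_one] at hst
        linear_combination hst
      have hsL : algebraMap K L s ≠ 0 := by simpa using hs
      rw [map_div₀, map_neg, div_eq_iff hsL]
      linear_combination -hx'
  have hspan : Submodule.span K (Set.range ![x, 1]) = ⊤ := by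
    apply hli.span_eq_top_of_card_eq_finrank
    simp [hquad]
  have heq : σ.toLinearMap = (AlgEquiv.refl : L ≃ₐ[K] L).toLinearMap := by
    apply LinearMap.ext_on hspan
    intro y hy
    rcases hy with ⟨i, rfl⟩
    fin_cases i <;> simp [hx]
  apply hσne
  apply AlgEquiv.ext
  intro a
  exact congrArg (fun f => f a) (congrArg DFunLike.coe heq)

lemma pi_dvd_of_frac {A K B L : Type} [CommRing A] [IsDomain A] [IsDiscreteValuationRing A]
    [Field K] [Algebra A K] [IsFractionRing A K]
    [Field L] [Algebra K L] [CommRing B] [IsDomain B] [IsDiscreteValuationRing B]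
    [Algebra A B] [Algebra B L] [Algebra A L] [IsScalarTower A B L] [IsScalarTower A K L]
    (hinj : Function.Injective (algebraMap B L))
    (π : B) (hπ : Ideal.span {π} = IsLocalRing.maximalIdeal B)
    (hram : Ideal.map (algebraMap A B) (IsLocalRing.maximalIdeal A) =
      (IsLocalRing.maximalIdeal B) ^ 2)
    (b : B) (k : K) (hk : algebraMap K L k * algebraMap B L π = algebraMap B L b) :
    π ∣ b := by
  have hπirr : Irreducible π := (IsDiscreteValuationRing.irreducible_iff_uniformizer π).2 hπ.symm
  have hπ0 : π ≠ 0 := hπirr.ne_zero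
  have hπu : ¬ IsUnit π := hπirr.not_isUnit
  obtain ⟨⟨x, y⟩, hxy⟩ := IsLocalization.mk'_surjective (nonZeroDivisors A) k
  have hyk : k * algebraMap A K y = algebraMap A K x := by
    rw [← hxy]; exact IsLocalization.mk'_spec K x y
  have hAK : Function.Injective (algebraMap A K) := IsFractionRing.injective A K
  have hAB : Function.Injective (algebraMap A B) := by
    intro a a' h
    apply hAK
    apply (algebraMap K L).injective
    rw [← IsScalarTower.algebraMap_apply, ← IsScalarTower.algebraMap_apply,
      IsScalarTower.algebraMap_apply A B L, IsScalarTower.algebraMap_apply A B L, h]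
  have key : algebraMap A B y * b = algebraMap A B x * π := by
    apply hinj
    rw [map_mul, map_mul, ← IsScalarTower.algebraMap_apply A B L,
      ← IsScalarTower.algebraMap_apply A B L, IsScalarTower.algebraMap_apply A K L,
      IsScalarTower.algebraMap_apply A K L, ← hyk, map_mul, ← hk]
    ring
  have hy0 : (y : A) ≠ 0 := nonZeroDivisors.coe_ne_zero y
  rcases eq_or_ne x 0 with hx0 | hx0
  · rw [hx0, map_zero, zero_mul] at key
    have hyB : algebraMap A B y ≠ 0 := fun h => hy0 (hAB (by rw [h, map_zero]))
    rcases mul_eq_zero.1 key with h | h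
    · exact absurd h hyB
    · exact h ▸ dvd_zero π
  by_contra hnd
  have hbu : IsUnit b := by
    by_contra hbu
    exact hnd (Ideal.mem_span_singleton.1 (hπ ▸ (IsLocalRing.mem_maximalIdeal b).2 hbu))
  obtain ⟨t, htirr⟩ := IsDiscreteValuationRing.exists_irreducible A
  have htA : IsLocalRing.maximalIdeal A = Ideal.span {t} :=
    (IsDiscreteValuationRing.irreducible_iff_uniformizer t).1 htirr
  have htB : Ideal.span {algebraMap A B t} = Ideal.span {π ^ 2} := by
    rw [← Ideal.span_singleton_pow, hπ, ← hram, htA, Ideal.map_span, Set.image_singleton]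
  obtain ⟨w, hw⟩ := Ideal.span_singleton_eq_span_singleton.1 htB.symm
  obtain ⟨m, u₁, hx⟩ := IsDiscreteValuationRing.eq_unit_mul_pow_irreducible hx0 htirr
  obtain ⟨n, u₂, hy⟩ := IsDiscreteValuationRing.eq_unit_mul_pow_irreducible hy0 htirr
  have hBt : algebraMap A B t = π ^ 2 * w := hw.symm
  have e1 : algebraMap A B y * b =
      π ^ (2 * n) * (algebraMap A B (u₂ : A) * w ^ n * b) := by
    rw [hy, map_mul, map_pow, hBt, mul_pow, ← pow_mul]
    ring
  have e2 : algebraMap A B x * π =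
      π ^ (2 * m + 1) * (algebraMap A B (u₁ : A) * w ^ m) := by
    rw [hx, map_mul, map_pow, hBt, mul_pow, ← pow_mul, pow_succ]
    ring
  have hu2 : IsUnit (algebraMap A B (u₂ : A) * w ^ n * b) :=
    ((u₂.isUnit.map (algebraMap A B)).mul (w.isUnit.pow n)).mul hbu
  have hu1 : IsUnit (algebraMap A B (u₁ : A) * w ^ m) :=
    (u₁.isUnit.map (algebraMap A B)).mul (w.isUnit.pow m)
  have hassoc : Associated (π ^ (2 * n)) (π ^ (2 * m + 1)) := by
    obtain ⟨v2, hv2⟩ := hu2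
    obtain ⟨v1, hv1⟩ := hu1
    have heq : π ^ (2 * n) * v2 = π ^ (2 * m + 1) * v1 := by
      rw [hv2, hv1, ← e1, ← e2, key]
    refine ⟨v2 * v1⁻¹, ?_⟩
    have h3 : (π ^ (2 * n) * v2) * ((v1⁻¹ : Bˣ) : B) =
        (π ^ (2 * m + 1) * v1) * ((v1⁻¹ : Bˣ) : B) := by rw [heq]
    simpa [mul_assoc] using h3
  have h1 := hassoc.dvd
  have h2 := hassoc.symm.dvd
  rw [pow_dvd_pow_iff hπ0 hπu] at h1 h2
  omega

/-- In the ramified non-dyadic local situation with `σ(π) = -π`, for every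
square-free lattice `Λ` the map `(ℓ + Λ, m + Λ) ↦ π·H(ℓ,m) + πB` is a well-defined
nondegenerate alternating `F`-bilinear form on `Λ*/Λ` (stated on representatives). -/
theorem ramified_nondyadic_alternating_form
    {A K L B : Type}
    [CommRing A] [IsDomain A] [IsDiscreteValuationRing A] [CharZero A]
    [IsAdicComplete (IsLocalRing.maximalIdeal A) A]
    [Field K] [Algebra A K] [IsFractionRing A K]
    [Field L] [Algebra K L] [Algebra.IsSeparable K L]
    (hquad : Module.finrank K L = 2)
    (σ : L ≃ₐ[K] L) (hσne : σ ≠ AlgEquiv.refl) (hσ2 : ∀ x : L, σ (σ x) = x)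
    [CommRing B] [IsDomain B] [IsDiscreteValuationRing B]
    [Algebra A B] [Algebra B L] [Algebra A L]
    [IsScalarTower A B L] [IsScalarTower A K L]
    [IsIntegralClosure B A L]
    (hσB : ∀ b : B, ∃ b' : B, σ (algebraMap B L b) = algebraMap B L b')
    (π : B) (hπ : Ideal.span {π} = IsLocalRing.maximalIdeal B)
    -- L/K is ramified: the maximal ideal of A generates the square of the maximal ideal of B
    (hram : Ideal.map (algebraMap A B) (IsLocalRing.maximalIdeal A) =
      (IsLocalRing.maximalIdeal B) ^ 2)
    -- non-dyadic: 2 is a unit of A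
    (h2 : IsUnit (2 : A))
    -- the uniformizer is chosen with σ(π) = -π
    (hσπ : σ (algebraMap B L π) = - algebraMap B L π)
    {V : Type} [AddCommGroup V] [Module L V] [FiniteDimensional L V]
    [Module B V] [IsScalarTower B L V]
    (H : V → V → L)
    (haddl : ∀ v v' w : V, H (v + v') w = H v w + H v' w)
    (haddr : ∀ v w w' : V, H v (w + w') = H v w + H v w')
    (hsmul : ∀ (a : L) (v w : V), H (a • v) w = a * H v w)
    (hherm : ∀ v w : V, H v w = σ (H w v))
    (hnd : ∀ v : V, (∀ w : V, H v w = 0) → v = 0)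
    -- Λ is a square-free lattice
    (Λ : Submodule B V) (hFG : Λ.FG) (hfull : Submodule.span L (Λ : Set V) = ⊤)
    (hint : (Λ : Set V) ⊆ hermDual B H (Λ : Set V))
    (hsf : ∀ v ∈ hermDual B H (Λ : Set V), π • v ∈ Λ) :
    -- values: π·H(ℓ,m) lies in (the image of) B for ℓ, m ∈ Λ*
    (∀ ℓ ∈ hermDual B H (Λ : Set V), ∀ m ∈ hermDual B H (Λ : Set V),
      ∃ b : B, algebraMap B L b = algebraMap B L π * H ℓ m) ∧
    -- well-definedness modulo Λ in both arguments
    (∀ ℓ ℓ' m m' : V, ℓ ∈ hermDual B H (Λ : Set V) → ℓ' ∈ hermDual B H (Λ : Set V) →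
      m ∈ hermDual B H (Λ : Set V) → m' ∈ hermDual B H (Λ : Set V) →
      ℓ - ℓ' ∈ Λ → m - m' ∈ Λ →
      ∃ b : B, algebraMap B L (π * b) =
        algebraMap B L π * H ℓ m - algebraMap B L π * H ℓ' m') ∧
    -- F-bilinearity on representatives
    (∀ (b : B) (ℓ m : V), ℓ ∈ hermDual B H (Λ : Set V) → m ∈ hermDual B H (Λ : Set V) →
      ∃ c : B, algebraMap B L (π * c) =
        algebraMap B L π * H (b • ℓ) m - algebraMap B L b * (algebraMap B L π * H ℓ m)) ∧
    -- the induced form is alternating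
    (∀ ℓ ∈ hermDual B H (Λ : Set V),
      ∃ b : B, algebraMap B L (π * b) = algebraMap B L π * H ℓ ℓ) ∧
    -- the induced form is nondegenerate on Λ*/Λ
    (∀ ℓ ∈ hermDual B H (Λ : Set V),
      (∀ m ∈ hermDual B H (Λ : Set V),
        ∃ b : B, algebraMap B L (π * b) = algebraMap B L π * H ℓ m) →
      ℓ ∈ Λ) := by
  classical
  have hBL : Function.Injective (algebraMap B L) := IsIntegralClosure.algebraMap_injective B A L
  have hπ0 : π ≠ 0 := by
    intro h
    exact IsDiscreteValuationRing.not_a_field B (by rw [← hπ, h, Ideal.span_singleton_eq_bot])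
  have hπL : algebraMap B L π ≠ 0 := fun h => hπ0 (hBL (by rw [h, map_zero]))
  have hsmulB : ∀ (b : B) (v : V), b • v = algebraMap B L b • v :=
    fun b v => (algebraMap_smul L b v).symm
  have hH0l : ∀ w : V, H 0 w = 0 := by
    intro w
    have h := haddl 0 0 w
    rw [add_zero] at h
    exact (left_eq_add.1 h)
  have hH0r : ∀ v : V, H v 0 = 0 := by
    intro v
    rw [hherm, hH0l, map_zero]
  have hsubl : ∀ v v' w : V, H (v - v') w = H v w - H v' w := by
    intro v v' w
    have h := haddl (v - v') v' w
    rw [sub_add_cancel] at h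
    linear_combination -h
  have hsubr : ∀ (v w w' : V), H v (w - w') = H v w - H v w' := by
    intro v w w'
    have h := haddr v (w - w') w'
    rw [sub_add_cancel] at h
    linear_combination -h
  have hsmulr : ∀ (a : L) (v w : V), H v (a • w) = σ a * H v w := by
    intro a v w
    rw [hherm, hsmul, map_mul, ← hherm]
  -- PART 1
  have part1 : ∀ ℓ ∈ hermDual B H (Λ : Set V), ∀ m ∈ hermDual B H (Λ : Set V),
      ∃ b : B, algebraMap B L b = algebraMap B L π * H ℓ m := by
    intro ℓ hℓ m hm
    obtain ⟨b₀, hb₀⟩ := hm (π • ℓ) (hsf ℓ hℓ)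
    have h1 : H m (π • ℓ) = σ (algebraMap B L π * H ℓ m) := by
      rw [hherm m (π • ℓ), hsmulB, hsmul]
    obtain ⟨b, hb⟩ := hσB b₀
    exact ⟨b, by rw [← hb, hb₀, h1, hσ2]⟩
  refine ⟨part1, ?_, ?_, ?_, ?_⟩
  · -- PART 2: well-definedness
    intro ℓ ℓ' m m' hℓ hℓ' hm hm' hd1 hd2
    obtain ⟨c, hc⟩ := hm (ℓ - ℓ') hd1
    obtain ⟨b₁, hb₁⟩ := hσB c
    obtain ⟨b₂, hb₂⟩ := hℓ' (m - m') hd2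
    refine ⟨b₁ + b₂, ?_⟩
    have e1 : H (ℓ - ℓ') m = algebraMap B L b₁ := by
      rw [hherm, ← hc, hb₁]
    have e2 : H (ℓ - ℓ') m = H ℓ m - H ℓ' m := hsubl ℓ ℓ' m
    have e4 : H ℓ' (m - m') = algebraMap B L b₂ := hb₂.symm
    have e5 : H ℓ' (m - m') = H ℓ' m - H ℓ' m' := hsubr ℓ' m m'
    rw [map_mul, map_add]
    linear_combination (algebraMap B L π) * (e2 - e1 + e5 - e4)
  · -- PART 3: bilinearity
    intro b ℓ m hℓ hm
    refine ⟨0, ?_⟩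
    rw [mul_zero, map_zero, hsmulB, hsmul]
    ring
  · -- PART 4: alternating
    intro ℓ hℓ
    obtain ⟨b₀, hb₀⟩ := part1 ℓ hℓ ℓ hℓ
    have hσb : σ (algebraMap B L b₀) = - algebraMap B L b₀ := by
      rw [hb₀, map_mul, hσπ, ← hherm]
      ring
    have hfix : σ (algebraMap B L b₀ / algebraMap B L π) =
        algebraMap B L b₀ / algebraMap B L π := by
      rw [map_div₀, hσb, hσπ, neg_div_neg_eq]
    obtain ⟨k, hk⟩ := fixed_mem_range hquad σ hσne hfix
    have hkk : algebraMap K L k * algebraMap B L π = algebraMap B L b₀ := by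
      rw [hk, div_mul_cancel₀ _ hπL]
    obtain ⟨b, hb⟩ := pi_dvd_of_frac hBL π hπ hram b₀ k hkk
    exact ⟨b, by rw [← hb₀, hb, map_mul]⟩
  · -- PART 5: nondegeneracy
    haveI hFD : FiniteDimensional K L := FiniteDimensional.of_finrank_eq_succ hquad
    haveI hFR : IsFractionRing B L :=
      IsIntegralClosure.isFractionRing_of_finite_extension A K L B
    haveI hNZ : NoZeroSMulDivisors B V := by
      refine ⟨fun {b v} h => ?_⟩
      rw [← algebraMap_smul L b v] at h
      rcases smul_eq_zero.1 h with h1 | h2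
      · exact Or.inl (hBL (by rw [h1, map_zero]))
      · exact Or.inr h2
    haveI : Module.Finite B Λ := Module.Finite.iff_fg.2 hFG
    haveI : Module.Free B Λ := Module.free_of_finite_type_torsion_free'
    set ι := Module.Free.ChooseBasisIndex B Λ with hι
    let bΛ : Module.Basis ι B Λ := Module.Free.chooseBasis B Λ
    let e : ι → V := fun i => (bΛ i : V)
    have hliB : LinearIndependent B e :=
      bΛ.linearIndependent.map' Λ.subtype (Submodule.ker_subtype Λ)
    have hliL : LinearIndependent L e := hliB.localization L (nonZeroDivisors B)
    have hspanB : Submodule.span B (Set.range e) = Λ := by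
      calc Submodule.span B (Set.range e)
          = Submodule.map Λ.subtype (Submodule.span B (Set.range bΛ)) := by
            rw [Submodule.map_span, ← Set.range_comp]; rfl
        _ = Submodule.map Λ.subtype ⊤ := by rw [bΛ.span_eq]
        _ = Λ := Submodule.map_subtype_top Λ
    have hmem : ∀ v : V, v ∈ Λ ↔ ∃ c : ι → B, (∑ i, c i • e i) = v := by
      intro v
      have h : v ∈ Submodule.span B (Set.range e) ↔ ∃ c : ι → B, (∑ i, c i • e i) = v :=
        Submodule.mem_span_range_iff_exists_fun B
      rw [hspanB] at h
      exact h
    have hspanL : Submodule.span L (Set.range e) = ⊤ := by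
      rw [eq_top_iff, ← hfull]
      have h1 : Submodule.span B (Set.range e) ≤
          (Submodule.span L (Set.range e)).restrictScalars B :=
        Submodule.span_le.2 Submodule.subset_span
      apply Submodule.span_le.2
      intro v hv
      exact h1 (hspanB.symm ▸ hv)
    let eb : Module.Basis ι L V := Module.Basis.mk hliL (le_of_eq hspanL.symm)
    have hebe : ∀ i, eb i = e i := fun i => Module.Basis.mk_apply hliL _ i
    -- sum expansion lemmas
    have hsuml : ∀ (s : Finset ι) (c : ι → L) (g : ι → V) (w : V),
        H (∑ i ∈ s, c i • g i) w = ∑ i ∈ s, c i * H (g i) w := by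
      intro s c g w
      induction s using Finset.induction_on with
      | empty => simpa using hH0l w
      | insert _ _ h ih =>
        rw [Finset.sum_insert h, Finset.sum_insert h, haddl, hsmul, ih]
    have hsumr : ∀ (s : Finset ι) (c : ι → L) (g : ι → V) (w : V),
        H w (∑ i ∈ s, c i • g i) = ∑ i ∈ s, σ (c i) * H w (g i) := by
      intro s c g w
      induction s using Finset.induction_on with
      | empty => simpa using hH0r w
      | insert _ _ h ih =>
        rw [Finset.sum_insert h, Finset.sum_insert h, haddr, hsmulr, ih]
    -- Gram matrix
    let G : Matrix ι ι L := Matrix.of fun i j => H (e i) (e j)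
    have hGdet : IsUnit G.det := by
      rw [isUnit_iff_ne_zero]
      intro hdet0
      have hdetT : G.transpose.det = 0 := by rw [Matrix.det_transpose]; exact hdet0
      obtain ⟨xv, hxv0, hxveq⟩ := (Matrix.exists_mulVec_eq_zero_iff).2 hdetT
      set v := ∑ i, xv i • e i with hv
      have hve : ∀ k, H v (e k) = 0 := by
        intro k
        rw [hv, hsuml]
        have h := congrFun hxveq k
        simpa [Matrix.mulVec, dotProduct, G, mul_comm] using h
      have hvH : ∀ w : V, H v w = 0 := by
        intro w
        have hw := eb.sum_repr w
        rw [← hw]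
        rw [show (∑ i, eb.repr w i • eb i) = ∑ i, eb.repr w i • e i from
          Finset.sum_congr rfl fun i _ => by rw [hebe]]
        rw [hsumr]
        simp [hve]
      exact hxv0 (funext fun i => Fintype.linearIndependent_iff.1 hliL xv (hnd v hvH) i)
    let C : Matrix ι ι L := G⁻¹
    have hCG : C * G = 1 := Matrix.nonsing_inv_mul G hGdet
    let f : ι → V := fun j => ∑ i, C j i • e i
    have hfe : ∀ j k, H (f j) (e k) = (1 : Matrix ι ι L) j k := by
      intro j k
      show H (∑ i, C j i • e i) (e k) = _
      rw [hsuml]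
      have h := congrFun (congrFun hCG j) k
      simpa [Matrix.mul_apply, G] using h
    have hef : ∀ k j, H (e k) (f j) = (1 : Matrix ι ι L) k j := by
      intro k j
      rw [hherm, hfe]
      rcases eq_or_ne j k with h | h
      · subst h; simp [Matrix.one_apply]
      · simp [Matrix.one_apply, h, Ne.symm h]
    -- f j lies in the dual
    have hdual_of : ∀ v : V, (∀ i, ∃ b : B, algebraMap B L b = H v (e i)) →
        v ∈ hermDual B H (Λ : Set V) := by
      intro v hv m hmΛ
      obtain ⟨c, hc⟩ := (hmem m).1 hmΛ
      choose bb hbb using hv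
      choose cc hcc using fun i => hσB (c i)
      refine ⟨∑ i, cc i * bb i, ?_⟩
      rw [← hc]
      rw [show (∑ i, c i • e i) = ∑ i, (algebraMap B L (c i)) • e i from
        Finset.sum_congr rfl fun i _ => by rw [algebraMap_smul]]
      rw [hsumr, map_sum]
      exact Finset.sum_congr rfl fun i _ => by rw [map_mul, hcc, hbb]
    have hfd : ∀ j, f j ∈ hermDual B H (Λ : Set V) := by
      intro j
      apply hdual_of
      intro i
      refine ⟨if j = i then 1 else 0, ?_⟩
      rw [hfe, Matrix.one_apply]
      split <;> simp
    -- conclude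
    intro ℓ hℓ hcond
    have hcoef : ∀ j, ∃ b : B, algebraMap B L b = eb.repr ℓ j := by
      intro j
      obtain ⟨b, hb⟩ := hcond (f j) (hfd j)
      have hHb : H ℓ (f j) = algebraMap B L b := by
        have h : algebraMap B L π * algebraMap B L b = algebraMap B L π * H ℓ (f j) := by
          rw [← map_mul]; exact hb
        exact (mul_left_cancel₀ hπL h).symm
      have hHr : H ℓ (f j) = eb.repr ℓ j := by
        conv_lhs => rw [← eb.sum_repr ℓ]
        rw [show (∑ i, eb.repr ℓ i • eb i) = ∑ i, eb.repr ℓ i • e i from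
          Finset.sum_congr rfl fun i _ => by rw [hebe]]
        rw [hsuml]
        rw [show (∑ i, eb.repr ℓ i * H (e i) (f j)) =
            ∑ i, eb.repr ℓ i * (1 : Matrix ι ι L) i j from
          Finset.sum_congr rfl fun i _ => by rw [hef]]
        simp [Matrix.one_apply]
      exact ⟨b, by rw [hHb] at hHr; exact hHr⟩
    choose cb hcb using hcoef
    refine (hmem ℓ).2 ⟨cb, ?_⟩
    rw [show (∑ i, cb i • e i) = ∑ i, (algebraMap B L (cb i)) • e i from
      Finset.sum_congr rfl fun i _ => by rw [algebraMap_smul]]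
    conv_rhs => rw [← eb.sum_repr ℓ]
    exact Finset.sum_congr rfl fun i _ => by rw [hcb, hebe]
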